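/- Let 0 < α < 1 and define K₁(x,y) = x^α (1−y)^α (x−y)^{−α} for (x,y) in D₋ = {(x,y) : 0 < y < x < 1}. Then K₁ satisfies ∂ₓK₁ ≤ 0, ∂ᵧK₁ ≥ 0 and ∂ₓᵧK₁ ≤ 0 at every point of D₋. -/

import Mathlib

open Real

private lemma hd_x (α x y : ℝ) (hx : 0 < x) (hxy : 0 < x - y) :
    HasDerivAt (fun x' => x' ^ α * (1 - y) ^ α * (x' - y) ^ (-α))
      ((α * x ^ (α - 1)) * (1 - y) ^ α * (x - y) ^ (-α) +
        (x ^ α * (1 - y) ^ α) * (-α * (x - y) ^ (-α - 1))) x := by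
  have h1 : HasDerivAt (fun x' : ℝ => x' ^ α) (α * x ^ (α - 1)) x :=
    Real.hasDerivAt_rpow_const (Or.inl hx.ne')
  have h2 : HasDerivAt (fun x' : ℝ => (x' - y) ^ (-α)) (-α * (x - y) ^ (-α - 1)) x := by
    have := ((hasDerivAt_id x).sub_const y).rpow_const (p := -α) (Or.inl hxy.ne')
    simpa using this
  have := (h1.mul_const ((1 - y) ^ α)).mul h2
  exact this

private lemma hd_y (K p q x y : ℝ) (ht : 0 < 1 - y) (hs : 0 < x - y) :
    HasDerivAt (fun y' => K * (1 - y') ^ p * (x - y') ^ q)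
      ((K * (-p * (1 - y) ^ (p - 1))) * (x - y) ^ q +
        (K * (1 - y) ^ p) * (-q * (x - y) ^ (q - 1))) y := by
  have h1 : HasDerivAt (fun y' : ℝ => (1 - y') ^ p) (-p * (1 - y) ^ (p - 1)) y := by
    have := ((hasDerivAt_id y).const_sub 1).rpow_const (p := p) (Or.inl ht.ne')
    simpa using this
  have h2 : HasDerivAt (fun y' : ℝ => (x - y') ^ q) (-q * (x - y) ^ (q - 1)) y := by
    have := ((hasDerivAt_id y).const_sub x).rpow_const (p := q) (Or.inl hs.ne')
    simpa using this
  have := (h1.const_mul K).mul h2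
  exact this

/-- For `0 < α < 1`, the kernel `K₁(x,y) = x^α (1-y)^α (x-y)^{-α}` satisfies
`∂ₓK₁ ≤ 0`, `∂ᵧK₁ ≥ 0` and `∂ₓᵧK₁ ≤ 0` on `D₋ = {0 < y < x < 1}`. -/
theorem statement8 (α : ℝ) (hα : 0 < α) (hα1 : α < 1) :
    ∀ x y : ℝ, 0 < y → y < x → x < 1 →
      deriv (fun x' => x' ^ α * (1 - y) ^ α * (x' - y) ^ (-α)) x ≤ 0 ∧
      0 ≤ deriv (fun y' => x ^ α * (1 - y') ^ α * (x - y') ^ (-α)) y ∧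
      deriv (fun y' =>
        deriv (fun x' => x' ^ α * (1 - y') ^ α * (x' - y') ^ (-α)) x) y ≤ 0 := by
  intro x y hy hyx hx1
  have hx : 0 < x := hy.trans hyx
  have hs : 0 < x - y := sub_pos.2 hyx
  have ht : 0 < 1 - y := by linarith
  have hx1' : 0 < 1 - x := by linarith
  -- positivity facts
  have hu : 0 < x ^ (α - 1) := rpow_pos_of_pos hx _
  have hw : 0 < (1 - y) ^ (α - 1) := rpow_pos_of_pos ht _
  have hQ : 0 < (1 - y) ^ α := rpow_pos_of_pos ht _
  have hv : 0 < (x - y) ^ (-α - 1) := rpow_pos_of_pos hs _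
  have hz : 0 < (x - y) ^ (-α - 1 - 1) := rpow_pos_of_pos hs _
  -- rpow step identities
  have e1 : x ^ (α - 1) * x = x ^ α := by
    rw [← Real.rpow_add_one hx.ne']; ring_nf
  have e2 : (x - y) ^ (-α - 1) * (x - y) = (x - y) ^ (-α) := by
    rw [← Real.rpow_add_one hs.ne']; ring_nf
  have e3 : (1 - y) ^ (α - 1) * (1 - y) = (1 - y) ^ α := by
    rw [← Real.rpow_add_one ht.ne']; ring_nf
  have e4 : (x - y) ^ (-α - 1 - 1) * (x - y) = (x - y) ^ (-α - 1) := by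
    rw [← Real.rpow_add_one hs.ne']; ring_nf
  refine ⟨?_, ?_, ?_⟩
  · rw [(hd_x α x y hx hs).deriv]
    rw [← e1, ← e2]
    nlinarith [mul_nonneg (mul_nonneg (mul_nonneg (mul_nonneg hα.le hu.le) hQ.le) hv.le) hy.le]
  · rw [(hd_y (x ^ α) α (-α) x y ht hs).deriv]
    rw [← e1, ← e3, ← e2]
    nlinarith [mul_nonneg (mul_nonneg (mul_nonneg (mul_nonneg (mul_nonneg hα.le hu.le) hw.le) hv.le) hx.le) hx1'.le]
  · have hev : (fun y' => deriv (fun x' => x' ^ α * (1 - y') ^ α * (x' - y') ^ (-α)) x)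
        =ᶠ[nhds y] (fun y' => (α * x ^ (α - 1)) * (1 - y') ^ α * (x - y') ^ (-α) +
          (-(α * x ^ α)) * (1 - y') ^ α * (x - y') ^ (-α - 1)) := by
      filter_upwards [Iio_mem_nhds hyx] with y' hy'
      rw [(hd_x α x y' hx (sub_pos.2 hy')).deriv]
      ring
    have hg : HasDerivAt (fun y' => (α * x ^ (α - 1)) * (1 - y') ^ α * (x - y') ^ (-α) +
          (-(α * x ^ α)) * (1 - y') ^ α * (x - y') ^ (-α - 1))
        ((((α * x ^ (α - 1)) * (-α * (1 - y) ^ (α - 1))) * (x - y) ^ (-α) +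
          ((α * x ^ (α - 1)) * (1 - y) ^ α) * (-(-α) * (x - y) ^ (-α - 1))) +
         (((-(α * x ^ α)) * (-α * (1 - y) ^ (α - 1))) * (x - y) ^ (-α - 1) +
          ((-(α * x ^ α)) * (1 - y) ^ α) * (-(-α - 1) * (x - y) ^ (-α - 1 - 1)))) y :=
      (hd_y (α * x ^ (α - 1)) α (-α) x y ht hs).add
        (hd_y (-(α * x ^ α)) α (-α - 1) x y ht hs)
    rw [hev.deriv_eq, hg.deriv]
    have hkey : α * (x - y) - (α + 1) * (x * (1 - y)) ≤ 0 := by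
      nlinarith [mul_nonneg hy.le hx1'.le, mul_pos hx ht]
    rw [← e1, ← e3, ← e2, ← e4]
    nlinarith [hkey,
      mul_nonneg (mul_nonneg (mul_nonneg hα.le hu.le) hw.le) hz.le]
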